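/- The subshift X is topologically transitive: for all nonempty open sets U, V ⊆ X there exists n ∈ ℤ with σ^n(U) ∩ V ≠ ∅. -/

import Mathlib

/-- The shift map σ on the full shift `{0,1}^ℤ`, `σ(x)_i = x_{i+1}`. -/
def shift (x : ℤ → Bool) : ℤ → Bool := fun i => x (i + 1)

/-- The iterate `σ^k` of the shift, for `k ∈ ℤ`. -/
def shiftZ (k : ℤ) (x : ℤ → Bool) : ℤ → Bool := fun i => x (i + k)

/-- `wlist n` is the list `[w_0, w_1, …, w_{2n+1}]` of the words of the construction:
`w_0 = 0`, `w_1 = 1`, and for `n ≥ 1`, `a ∈ {0,1}`,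
`w_{2n+a} = w_{2n-2} w_a w_{2n-2} ∏_{k=0}^{2n-1} (w_k^n w_{2n-2})`. -/
def wlist : ℕ → List (List Bool)
  | 0 => [[false], [true]]
  | n + 1 =>
    let prev := wlist n
    let w : ℕ → List Bool := fun k => prev.getD k []
    let base := w (2 * n)
    let tail := (List.range (2 * n + 2)).flatMap
      (fun k => (List.replicate (n + 1) (w k)).flatten ++ base)
    prev ++ [base ++ w 0 ++ base ++ tail, base ++ w 1 ++ base ++ tail]

/-- The word `w_n`. -/
def wrd (n : ℕ) : List Bool := (wlist n).getD n []

/-- The periodic point `u^ℤ` associated to a nonempty word `u`;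
it satisfies `(u^ℤ)_{m|u|+i} = u_i` for all `m ∈ ℤ`, `0 ≤ i < |u|`. -/
def perPt (u : List Bool) : ℤ → Bool := fun i => u.getD ((i % (u.length : ℤ)).toNat) false

/-- The union of the shift orbits of the points `w_n^ℤ`. -/
def Xgen : Set (ℤ → Bool) := {x | ∃ (n : ℕ) (k : ℤ), x = shiftZ k (perPt (wrd n))}

/-- The subshift `X`: the smallest subshift containing the points `w_n^ℤ`,
i.e. the closure of the union of their shift orbits. -/
def XX : Set (ℤ → Bool) := closure Xgen

/-- The word `u` occurs as a (contiguous) subword of the point `x`. -/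
def occursIn (u : List Bool) (x : ℤ → Bool) : Prop :=
  ∃ i : ℤ, ∀ j : ℕ, j < u.length → x (i + (j : ℤ)) = u.getD j false

/-! ### powers of words -/

def pw (u : List Bool) (r : ℕ) : List Bool := (List.replicate r u).flatten

lemma pw_succ (u : List Bool) (r : ℕ) : pw u (r+1) = u ++ pw u r := by
  simp [pw, List.replicate_succ]

lemma pw_length (u : List Bool) (r : ℕ) : (pw u r).length = r * u.length := by
  induction r with
  | zero => simp [pw]
  | succ r ih => rw [pw_succ, List.length_append, ih]; ring

lemma pw_add (u : List Bool) (r s : ℕ) : pw u (r + s) = pw u r ++ pw u s := by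
  unfold pw
  rw [List.replicate_add, List.flatten_append]

lemma pw_getD (u : List Bool) (hu : 0 < u.length) :
    ∀ r t, t < r * u.length → (pw u r).getD t false = u.getD (t % u.length) false := by
  intro r
  induction r with
  | zero => intro t ht; omega
  | succ r ih =>
    intro t ht
    rw [pw_succ]
    by_cases h : t < u.length
    · rw [List.getD_append _ _ _ _ h, Nat.mod_eq_of_lt h]
    · push_neg at h
      rw [List.getD_append_right _ _ _ _ h]
      have h2 : t - u.length < r * u.length := by
        have h3 : (r+1) * u.length = r * u.length + u.length := by ring
        omega
      rw [ih _ h2, ← Nat.mod_eq_sub_mod h]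

/-! ### the words w_n -/

def wA (n a : ℕ) : List Bool :=
  (wlist n).getD (2*n) [] ++ (wlist n).getD a [] ++ (wlist n).getD (2*n) [] ++
    (List.range (2*n+2)).flatMap
      (fun k => (List.replicate (n+1) ((wlist n).getD k [])).flatten ++ (wlist n).getD (2*n) [])

lemma wlist_succ (n : ℕ) : wlist (n+1) = wlist n ++ [wA n 0, wA n 1] := rfl

lemma wlist_length (n : ℕ) : (wlist n).length = 2*n+2 := by
  induction n with
  | zero => rfl
  | succ n ih =>
    rw [wlist_succ, List.length_append, ih]
    simp only [List.length_cons, List.length_nil]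
    omega

lemma wlist_getD_mono : ∀ d n k, k < 2*n+2 → (wlist (n+d)).getD k [] = (wlist n).getD k [] := by
  intro d
  induction d with
  | zero => intro n k h; rfl
  | succ d ih =>
    intro n k h
    rw [show n + (d+1) = (n+d)+1 by ring, wlist_succ,
      List.getD_append _ _ _ _ (by rw [wlist_length]; omega)]
    exact ih n k h

lemma wrd_eq (n k : ℕ) (h : k < 2*n+2) : (wlist n).getD k [] = wrd k := by
  rcases le_or_gt k n with hk | hk
  · have := wlist_getD_mono (n - k) k k (by omega)
    rw [show k + (n-k) = n by omega] at this
    rw [this]; rfl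
  · have := wlist_getD_mono (k - n) n k h
    rw [show n + (k-n) = k by omega] at this
    rw [← this]; rfl

lemma wrd_even (n : ℕ) :
    wrd (2*n+2) = wrd (2*n) ++ wrd 0 ++ wrd (2*n) ++
      (List.range (2*n+2)).flatMap (fun k => pw (wrd k) (n+1) ++ wrd (2*n)) := by
  have h : wrd (2*n+2) = (wlist (n+1)).getD (2*n+2) [] := (wrd_eq (n+1) (2*n+2) (by omega)).symm
  rw [h, wlist_succ, List.getD_append_right _ _ _ _ (by rw [wlist_length]), wlist_length,
    show 2*n+2 - (2*n+2) = 0 by omega]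
  show wA n 0 = _
  unfold wA pw
  rw [wrd_eq n (2*n) (by omega), wrd_eq n 0 (by omega)]
  congr 1
  apply List.flatMap_congr  -- maybe wrong name
  intro k hk
  rw [List.mem_range] at hk
  rw [wrd_eq n k (by omega)]

lemma wrd_len_pos (m : ℕ) : 0 < (wrd m).length := by
  suffices h : ∀ n k, k < 2*n+2 → 0 < ((wlist n).getD k []).length by
    have := h m m (by omega)
    rwa [wrd_eq m m (by omega)] at this
  intro n
  induction n with
  | zero =>
    intro k h
    interval_cases k <;> simp [wlist]
  | succ n ih =>
    intro k h
    rcases lt_or_ge k (2*n+2) with h1 | h1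
    · rw [wlist_succ, List.getD_append _ _ _ _ (by rw [wlist_length]; omega)]
      exact ih k h1
    · have hb := ih (2*n) (by omega)
      rcases (by omega : k = 2*n+2 ∨ k = 2*n+3) with rfl | rfl
      · rw [wlist_succ, List.getD_append_right _ _ _ _ (by rw [wlist_length]), wlist_length,
          show 2*n+2 - (2*n+2) = 0 by omega, List.getD_cons_zero]
        simp only [wA, List.length_append]
        omega
      · rw [wlist_succ, List.getD_append_right _ _ _ _ (by rw [wlist_length]; omega), wlist_length,
          show 2*n+3 - (2*n+2) = 1 by omega, List.getD_cons_succ, List.getD_cons_zero]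
        simp only [wA, List.length_append]
        omega

lemma pw_infix_wrd (m n : ℕ) (hm : m < 2*n+2) (r : ℕ) (hr : r ≤ n+1) :
    pw (wrd m) r <:+: wrd (2*n+2) := by
  rw [wrd_even n]
  have h1 : pw (wrd m) (n+1) = pw (wrd m) r ++ pw (wrd m) (n+1-r) := by
    rw [← pw_add]; congr 1; omega
  obtain ⟨d, hd⟩ : ∃ d, 2*n+2 = (m+1) + d := ⟨2*n+2-(m+1), by omega⟩
  have h2 : List.range (2*n+2) = (List.range m ++ [m]) ++
      (List.range d).map (fun x => (m+1) + x) := by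
    rw [hd, List.range_add, List.range_succ]
  set f : ℕ → List Bool := fun k => pw (wrd k) (n+1) ++ wrd (2*n) with hf
  refine ⟨wrd (2*n) ++ wrd 0 ++ wrd (2*n) ++ (List.range m).flatMap f,
    (pw (wrd m) (n+1-r) ++ wrd (2*n)) ++
      (((List.range d).map (fun x => (m+1) + x)).flatMap f), ?_⟩
  rw [h2, List.flatMap_append, List.flatMap_append]
  have h3 : [m].flatMap f = pw (wrd m) r ++ (pw (wrd m) (n+1-r) ++ wrd (2*n)) := by
    simp [hf, h1, List.append_assoc]
  rw [h3]
  simp [List.append_assoc]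

/-! ### perPt -/

lemma perPt_eq_getD (u : List Bool) (hu : 0 < u.length) (t : ℕ) (ht : t < u.length) :
    perPt u (t : ℤ) = u.getD t false := by
  unfold perPt
  rw [Int.emod_eq_of_lt (by positivity) (by exact_mod_cast ht)]
  simp

lemma main_window (m : ℕ) (k a : ℤ) (L n : ℕ) (hm : m < 2*n+2) (hL : L ≤ n) :
    ∃ s : ℤ, ∀ j : ℕ, j < L →
      shiftZ s (perPt (wrd (2*n+2))) (a + j) = shiftZ k (perPt (wrd m)) (a + j) := by
  set u := wrd m with hu'
  have hu : 0 < u.length := wrd_len_pos m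
  have hulen : (0:ℤ) < (u.length : ℤ) := by exact_mod_cast hu
  set r := L + 1 with hr'
  obtain ⟨p, s', hps⟩ := pw_infix_wrd m n hm r (by omega)
  rw [← hu'] at hps
  set c : ℤ := (a + k) % u.length with hc
  have hc0 : 0 ≤ c := Int.emod_nonneg _ (by exact_mod_cast hu.ne')
  have hclt : c < u.length := Int.emod_lt_of_pos _ hulen
  refine ⟨(p.length : ℤ) + c - a, ?_⟩
  intro j hj
  have hcj : c.toNat + j < r * u.length := by
    have h1 : r * u.length = u.length + L * u.length := by rw [hr']; ring
    have h2 : L ≤ L * u.length := Nat.le_mul_of_pos_right _ hu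
    omega
  have hidx : a + (j:ℤ) + ((p.length:ℤ) + c - a) = ((p.length + c.toNat + j : ℕ) : ℤ) := by
    push_cast [Int.toNat_of_nonneg hc0]; ring
  show perPt (wrd (2*n+2)) (a + j + ((p.length:ℤ) + c - a)) = perPt u (a + j + k)
  rw [hidx]
  have htlen : p.length + c.toNat + j < (wrd (2*n+2)).length := by
    rw [← hps]
    simp only [List.length_append, pw_length]
    omega
  rw [perPt_eq_getD _ (by omega) _ htlen, ← hps, List.append_assoc,
    List.getD_append_right _ _ _ _ (by omega),
    show p.length + c.toNat + j - p.length = c.toNat + j by omega,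
    List.getD_append _ _ _ _ (by rw [pw_length]; exact hcj),
    pw_getD u hu r _ hcj]
  -- now RHS
  obtain ⟨q, hq⟩ : ∃ q : ℤ, a + k = (u.length : ℤ) * q + c :=
    ⟨(a+k)/u.length, by rw [hc]; exact (Int.mul_ediv_add_emod _ _).symm⟩
  have harg : a + (j:ℤ) + k = ((c.toNat + j : ℕ) : ℤ) + (u.length : ℤ) * q := by
    push_cast [Int.toNat_of_nonneg hc0]; linarith
  have hR : perPt u (a + (j:ℤ) + k) = u.getD ((c.toNat + j) % u.length) false := by
    unfold perPt
    rw [harg, Int.add_mul_emod_self_left, ← Int.natCast_mod, Int.toNat_natCast]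
  exact hR.symm

/-! ### topology -/

lemma exists_gen_window (W : Set (ℤ → Bool)) (hW : IsOpen W) (x : ℤ → Bool)
    (hx : x ∈ W ∩ XX) :
    ∃ (m : ℕ) (k : ℤ) (M : ℕ),
      ∀ z : ℤ → Bool, (∀ j : ℕ, j < 2*M+1 →
        z (-(M:ℤ) + j) = shiftZ k (perPt (wrd m)) (-(M:ℤ) + j)) → z ∈ W := by
  obtain ⟨hxW, hxX⟩ := hx
  obtain ⟨x', hx'W, hx'g⟩ := mem_closure_iff.mp hxX W hW hxW
  obtain ⟨m, k, rfl⟩ := hx'g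
  obtain ⟨I, uu, hIu, hsub⟩ := isOpen_pi_iff.mp hW _ hx'W
  refine ⟨m, k, I.sup (fun i => i.natAbs), ?_⟩
  intro z hz
  apply hsub
  intro i hi
  have hi' : i ∈ I := hi
  have hb : i.natAbs ≤ I.sup (fun i => i.natAbs) := Finset.le_sup hi'
  set M := I.sup (fun i => i.natAbs)
  have hzi : z i = shiftZ k (perPt (wrd m)) i := by
    have h2 : (-(M:ℤ) + ((i + M).toNat : ℤ)) = i := by omega
    have := hz (i + (M:ℤ)).toNat (by omega)
    rwa [h2] at this
  rw [hzi]
  exact (hIu i hi').2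

/-- The subshift `X` is topologically transitive: for all nonempty (relatively) open
subsets `U, V` of `X` there is `n ∈ ℤ` with `σ^n(U) ∩ V ≠ ∅`. -/
theorem stmt8 :
    ∀ U V : Set (ℤ → Bool), IsOpen U → IsOpen V →
      (U ∩ XX).Nonempty → (V ∩ XX).Nonempty →
      ∃ n : ℤ, (shiftZ n '' (U ∩ XX) ∩ (V ∩ XX)).Nonempty := by
  intro U V hU hV hUne hVne
  obtain ⟨x, hx⟩ := hUne
  obtain ⟨y, hy⟩ := hVne
  obtain ⟨m₁, k₁, M₁, hU'⟩ := exists_gen_window U hU x hx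
  obtain ⟨m₂, k₂, M₂, hV'⟩ := exists_gen_window V hV y hy
  set n := max (max m₁ m₂) (max (2*M₁+1) (2*M₂+1)) with hn
  have hn1 : m₁ ≤ n := le_trans (le_max_left _ _) (le_max_left _ _)
  have hn2 : m₂ ≤ n := le_trans (le_max_right _ _) (le_max_left _ _)
  have hn3 : 2*M₁+1 ≤ n := le_trans (le_max_left _ _) (le_max_right _ _)
  have hn4 : 2*M₂+1 ≤ n := le_trans (le_max_right _ _) (le_max_right _ _)
  obtain ⟨s₁, hs₁⟩ := main_window m₁ k₁ (-(M₁:ℤ)) (2*M₁+1) n (by omega) (by omega)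
  obtain ⟨s₂, hs₂⟩ := main_window m₂ k₂ (-(M₂:ℤ)) (2*M₂+1) n (by omega) (by omega)
  refine ⟨s₂ - s₁, shiftZ s₂ (perPt (wrd (2*n+2))), ⟨shiftZ s₁ (perPt (wrd (2*n+2))), ⟨?_, ?_⟩, ?_⟩, ?_, ?_⟩
  · exact hU' _ (fun j hj => hs₁ j hj)
  · exact subset_closure ⟨2*n+2, s₁, rfl⟩
  · funext i
    show perPt (wrd (2*n+2)) (i + (s₂ - s₁) + s₁) = perPt (wrd (2*n+2)) (i + s₂)
    congr 1; ring
  · exact hV' _ (fun j hj => hs₂ j hj)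
  · exact subset_closure ⟨2*n+2, s₂, rfl⟩
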